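/- arXiv:1207.6099 — 9 statements merged into one kernel-verified Lean document; each statement's English description precedes it below -/
import Mathlib

section
/- Let L/k be a field extension, σ a field automorphism of L of order n fixing k, and r ∈ L. If 1 + r + r·σ(r) + r·σ(r)·σ²(r) + ... + r·σ(r)···σ^{n-2}(r) = 0, then r·σ(r)·σ²(r)···σ^{n-1}(r) = 1. -/
/-- If `σ` is an automorphism of `L` of order `n` fixing `k`, and
`1 + r + rσ(r) + ⋯ + rσ(r)⋯σ^{n-2}(r) = 0` (the Murphy condition), then
`r·σ(r)⋯σ^{n-1}(r) = 1`. -/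
theorem murphy_norm_one {k L : Type*} [Field k] [Field L] [Algebra k L]
    (n : ℕ) (hn : 0 < n) (σ : L ≃ₐ[k] L) (hord : orderOf σ = n) (r : L)
    (hM : ∑ j ∈ Finset.range n, ∏ i ∈ Finset.range j, (σ ^ i) r = 0) :
    ∏ i ∈ Finset.range n, (σ ^ i) r = 1 := by
  have key : ∀ j : ℕ, r * σ (∏ i ∈ Finset.range j, (σ ^ i) r)
      = ∏ i ∈ Finset.range (j + 1), (σ ^ i) r := by
    intro j
    rw [map_prod, Finset.prod_range_succ']
    simp [pow_succ', mul_comm]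
  have h1 : ∑ j ∈ Finset.range (n + 1), ∏ i ∈ Finset.range j, (σ ^ i) r
      = ∏ i ∈ Finset.range n, (σ ^ i) r := by
    rw [Finset.sum_range_succ, hM, zero_add]
  have h2 : ∑ j ∈ Finset.range (n + 1), ∏ i ∈ Finset.range j, (σ ^ i) r = 1 := by
    rw [Finset.sum_range_succ']
    have : ∑ j ∈ Finset.range n, ∏ i ∈ Finset.range (j + 1), (σ ^ i) r
        = r * σ (∑ j ∈ Finset.range n, ∏ i ∈ Finset.range j, (σ ^ i) r) := by
      rw [map_sum, Finset.mul_sum]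
      exact Finset.sum_congr rfl fun j _ => (key j).symm
    rw [this, hM, map_zero, mul_zero, zero_add]
    simp
  rw [← h1, h2]
end

section
/- Let k be a field, t ∈ k, P(x) = x⁴ - t·x³ - 6x² + t·x + 1, and σ(x) = (-x-1)/(x-1). If r is a root of P with r ∉ {1, -1, 0}, then σ(r), σ²(r) = -1/r, and σ³(r) = (r-1)/(r+1) are also roots of P, and 1 + r + r·σ(r) + r·σ(r)·σ²(r) = 0. -/
private lemma quartic_div_aux {K : Type*} [Field K] (T N D : K) (hD : D ≠ 0)
    (h : N ^ 4 - T * N ^ 3 * D - 6 * N ^ 2 * D ^ 2 + T * N * D ^ 3 + D ^ 4 = 0) :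
    (N / D) ^ 4 - T * (N / D) ^ 3 - 6 * (N / D) ^ 2 + T * (N / D) + 1 = 0 := by
  have hinv : D * D⁻¹ = 1 := mul_inv_cancel₀ hD
  linear_combination D⁻¹ ^ 4 * h +
    (T * N ^ 3 * D⁻¹ ^ 3 + 6 * N ^ 2 * D⁻¹ ^ 2 * (D * D⁻¹ + 1)
      - T * N * D⁻¹ * (D ^ 2 * D⁻¹ ^ 2 + D * D⁻¹ + 1)
      - (D ^ 3 * D⁻¹ ^ 3 + D ^ 2 * D⁻¹ ^ 2 + D * D⁻¹ + 1)) * hinv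

/-- For the simplest quartic `P(x) = x⁴ - t x³ - 6x² + t x + 1` and
`σ(x) = (-x-1)/(x-1)`: if `r` is a root of `P` with `r ∉ {1, -1, 0}`, then
`σ(r)`, `σ²(r) = -1/r`, `σ³(r) = (r-1)/(r+1)` are roots of `P`, and
`1 + r + r·σ(r) + r·σ(r)·σ²(r) = 0`. -/
theorem simplest_quartic_roots {k K : Type*} [Field k] [Field K] [Algebra k K]
    (t : k) (r : K) (hr1 : r ≠ 1) (hrneg1 : r ≠ -1) (hr0 : r ≠ 0)
    (hr : r ^ 4 - algebraMap k K t * r ^ 3 - 6 * r ^ 2 + algebraMap k K t * r + 1 = 0) :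
    ((-r - 1) / (r - 1)) ^ 4 - algebraMap k K t * ((-r - 1) / (r - 1)) ^ 3
        - 6 * ((-r - 1) / (r - 1)) ^ 2 + algebraMap k K t * ((-r - 1) / (r - 1)) + 1 = 0 ∧
    (-1 / r) ^ 4 - algebraMap k K t * (-1 / r) ^ 3
        - 6 * (-1 / r) ^ 2 + algebraMap k K t * (-1 / r) + 1 = 0 ∧
    ((r - 1) / (r + 1)) ^ 4 - algebraMap k K t * ((r - 1) / (r + 1)) ^ 3
        - 6 * ((r - 1) / (r + 1)) ^ 2 + algebraMap k K t * ((r - 1) / (r + 1)) + 1 = 0 ∧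
    1 + r + r * ((-r - 1) / (r - 1)) + r * ((-r - 1) / (r - 1)) * (-1 / r) = 0 := by
  have h1 : r - 1 ≠ 0 := sub_ne_zero.mpr hr1
  have h2 : r + 1 ≠ 0 := fun h => hrneg1 (by linear_combination h)
  refine ⟨quartic_div_aux _ _ _ h1 (by linear_combination (-4 : K) * hr),
    quartic_div_aux _ _ _ hr0 (by linear_combination hr),
    quartic_div_aux _ _ _ h2 (by linear_combination (-4 : K) * hr), ?_⟩
  field_simp
  ring
end

section
/- Let L/k be a finite Galois extension with Galois group G, σ ∈ G of order n, and r ∈ L satisfying the Murphy condition (M) for σ. If γ ∈ G commutes with σ, then γ(r) also satisfies (M) for σ. -/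
/-- If `L/k` is finite Galois, `σ` has order `n`, `r` satisfies the
Murphy condition for `σ`, and `γ` commutes with `σ`, then `γ(r)` satisfies the
Murphy condition for `σ`. -/
theorem murphy_of_centralizer {k L : Type*} [Field k] [Field L] [Algebra k L]
    [FiniteDimensional k L] [IsGalois k L]
    (n : ℕ) (hn : 0 < n) (σ γ : L ≃ₐ[k] L) (hord : orderOf σ = n)
    (hcomm : Commute γ σ) (r : L)
    (hM : ∑ j ∈ Finset.range n, ∏ i ∈ Finset.range j, (σ ^ i) r = 0) :
    ∑ j ∈ Finset.range n, ∏ i ∈ Finset.range j, (σ ^ i) (γ r) = 0 := by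
  have key : ∀ i : ℕ, (σ ^ i) (γ r) = γ ((σ ^ i) r) := by
    intro i
    have h : σ ^ i * γ = γ * σ ^ i := (hcomm.pow_right i).eq.symm
    calc (σ ^ i) (γ r) = ((σ ^ i) * γ) r := rfl
      _ = (γ * σ ^ i) r := by rw [h]
      _ = γ ((σ ^ i) r) := rfl
  calc ∑ j ∈ Finset.range n, ∏ i ∈ Finset.range j, (σ ^ i) (γ r)
      = γ (∑ j ∈ Finset.range n, ∏ i ∈ Finset.range j, (σ ^ i) r) := by
        rw [map_sum]
        refine Finset.sum_congr rfl fun j _ => ?_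
        rw [map_prod]
        exact Finset.prod_congr rfl fun i _ => key i
    _ = 0 := by rw [hM, map_zero]
end

section
/- Let L/k be a cyclic extension of degree n > 2 with Galois group ⟨σ⟩, with k an infinite field. Then there exists r ∈ L with L = k(r) and 1 + r + rσ(r) + ... + rσ(r)···σ^{n-2}(r) = 0. -/
open Module


section
variable {k L : Type*} [Field k] [Field L] [Algebra k L] [FiniteDimensional k L] [IsGalois k L]

lemma aux_fixedField_bot' :
    IntermediateField.fixedField (⊥ : Subgroup (L ≃ₐ[k] L)) = ⊤ := by
  apply eq_top_iff.mpr
  intro x _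
  intro g
  have hg : (g : L ≃ₐ[k] L) = 1 := Subgroup.mem_bot.mp g.2
  show (g : L ≃ₐ[k] L) x = x
  rw [hg]; rfl

lemma aux_sum' (σ : L ≃ₐ[k] L) (hgen : ∀ τ : L ≃ₐ[k] L, τ ∈ Subgroup.zpowers σ)
    (n : ℕ) (hord : orderOf σ = n) (hnpos : 0 < n) (x : L) :
    ∑ j ∈ Finset.range n, (σ ^ j) x = algebraMap k L (Algebra.trace k L x) := by
  rw [trace_eq_sum_automorphisms]
  have hfin : IsOfFinOrder σ := orderOf_pos_iff.mp (by omega)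
  have hbij : Function.Bijective (fun j : Fin n => σ ^ (j : ℕ)) := by
    constructor
    · intro i j hij
      exact Fin.ext (pow_injOn_Iio_orderOf (by simpa [hord] using i.2) (by simpa [hord] using j.2) hij)
    · intro τ
      obtain ⟨j, hj⟩ := (Submonoid.mem_powers_iff _ _).mp
        (hfin.mem_powers_iff_mem_zpowers.mpr (hgen τ))
      exact ⟨⟨j % n, Nat.mod_lt _ hnpos⟩, by simp only [← hord]; rw [pow_mod_orderOf]; exact hj⟩
  rw [← Fin.sum_univ_eq_sum_range (fun j => (σ ^ j) x) n]
  exact Fintype.sum_bijective _ hbij _ _ (fun j => rfl)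
end


set_option linter.unusedSectionVars false in
lemma aux_not_le_eigen {k L : Type*} [Field k] [Field L] [Algebra k L]
    [FiniteDimensional k L] [IsGalois k L]
    (σ : L ≃ₐ[k] L) (hgen : ∀ τ : L ≃ₐ[k] L, τ ∈ Subgroup.zpowers σ)
    (n : ℕ) (hord : orderOf σ = n) (hn2 : 2 < n)
    (hsum : ∀ x : L, ∑ j ∈ Finset.range n, (σ ^ j) x = algebraMap k L (Algebra.trace k L x))
    (m : ℕ) (hm0 : 0 < m) (hmn : m < n) (c : k) :
    ¬ (LinearMap.ker (Algebra.trace k L : L →ₗ[k] k) ≤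
        Module.End.eigenspace ((σ ^ m).toLinearMap) c) := by
  intro hle
  obtain ⟨z₀, hz₀⟩ := Algebra.trace_surjective k L 1
  set T : L →ₗ[k] k := Algebra.trace k L with hT
  set w : L := (σ ^ m) z₀ - c • z₀ with hw
  have hfun : ∀ x : L, (σ ^ m) x = c • x + (T x) • w := by
    intro x
    have hx : x - (T x) • z₀ ∈ LinearMap.ker T := by
      simp [LinearMap.mem_ker, map_sub, map_smul, hz₀, smul_eq_mul]
    have h2 := hle hx
    rw [Module.End.mem_eigenspace_iff] at h2
    have h3 : (σ ^ m) x - (T x) • (σ ^ m) z₀ = c • x - c • ((T x) • z₀) := by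
      have := h2
      simpa [map_sub, map_smul, smul_sub] using this
    have h4 : c • ((T x) • z₀) = (T x) • (c • z₀) := smul_comm _ _ _
    rw [hw, smul_sub]
    rw [h4] at h3
    linear_combination (norm := module) h3
  -- characters
  set M : Fin n → (L →* L) := fun j => MonoidHomClass.toMonoidHom (σ ^ (j : ℕ)) with hM
  have hinj : Function.Injective M := by
    intro i j hij
    have : (σ ^ (i : ℕ)) = (σ ^ (j : ℕ)) := by
      apply AlgEquiv.ext; intro x
      exact DFunLike.congr_fun hij x
    exact Fin.ext (pow_injOn_Iio_orderOf (by simp [hord]) (by simp [hord]) this)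
  have hLI := (linearIndependent_monoidHom L L).comp M hinj
  set a : Fin n → L := fun j =>
    (if j = (⟨m, hmn⟩ : Fin n) then 1 else 0) -
    (if j = (⟨0, by omega⟩ : Fin n) then algebraMap k L c else 0) - w with ha
  have hzero : ∑ j, a j • ((M j : L → L)) = 0 := by
    funext x
    have : ∑ j, a j * (σ ^ (j : ℕ)) x = 0 := by
      simp only [ha, sub_mul, Finset.sum_sub_distrib]
      simp only [ite_mul, one_mul, zero_mul, Finset.sum_ite_eq', Finset.mem_univ, if_true,
        ← Finset.mul_sum]
      rw [Fin.sum_univ_eq_sum_range (fun j => (σ ^ j) x) n, hsum x, hfun x]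
      rw [Algebra.smul_def, Algebra.smul_def]
      simp only [pow_zero, AlgEquiv.one_apply]
      ring
    simpa [hM, Finset.sum_apply, Pi.smul_apply, smul_eq_mul] using this
  have hall := Fintype.linearIndependent_iff.mp hLI a (by exact hzero)
  have hw0 : w = 0 := by
    rcases eq_or_ne m 1 with h | h
    · have h2 := hall ⟨2, by omega⟩
      simpa [ha, Fin.ext_iff, h] using h2
    · have h2 := hall ⟨1, by omega⟩
      have hne1 : (1 : ℕ) ≠ m := fun hEq => h hEq.symm
      simpa [ha, Fin.ext_iff, hne1] using h2
  have hm := hall ⟨m, hmn⟩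
  have hne : (⟨m, hmn⟩ : Fin n) ≠ ⟨0, by omega⟩ := by
    simp only [Fin.ext_iff, ne_eq]
    omega
  simp only [ha, if_pos rfl, if_neg hne, hw0, sub_zero] at hm
  exact one_ne_zero hm

/-- If `L/k` is cyclic of degree `n > 2` with Galois group generated by
`σ`, and `k` is infinite, then there is a primitive element `r` of `L/k` satisfying
the Murphy condition. -/
theorem exists_primitive_murphy {k L : Type*} [Field k] [Infinite k] [Field L]
    [Algebra k L] [FiniteDimensional k L] [IsGalois k L]
    (σ : L ≃ₐ[k] L) (hgen : ∀ τ : L ≃ₐ[k] L, τ ∈ Subgroup.zpowers σ)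
    (n : ℕ) (hn : n = Module.finrank k L) (hn2 : 2 < n) :
    ∃ r : L, IntermediateField.adjoin k {r} = ⊤ ∧
      ∑ j ∈ Finset.range n, ∏ i ∈ Finset.range j, (σ ^ i) r = 0 := by
  classical
  have hord : orderOf σ = n := by
    rw [orderOf_eq_card_of_forall_mem_zpowers hgen, IsGalois.card_aut_eq_finrank, hn]
  set T : L →ₗ[k] k := (Algebra.trace k L : L →ₗ[k] k) with hT
  set V : Submodule k L := LinearMap.ker T with hV
  have hsum : ∀ x : L, ∑ j ∈ Finset.range n, (σ ^ j) x = algebraMap k L (Algebra.trace k L x) :=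
    fun x => aux_sum' σ hgen n hord (by omega) x
  -- V is nontrivial
  have hVbot : V ≠ ⊥ := by
    intro h
    have h1 : finrank k (LinearMap.range T) + finrank k V = finrank k L :=
      LinearMap.finrank_range_add_finrank_ker T
    rw [h, finrank_bot] at h1
    have h2 : finrank k (LinearMap.range T) ≤ finrank k k := Submodule.finrank_le _
    rw [Module.finrank_self] at h2
    omega
  obtain ⟨v0, hv0V, hv0⟩ := Submodule.exists_mem_ne_zero_of_ne_bot hVbot
  -- the finite family of proper subspaces of V
  let φ : Fin n → Module.End k L := fun m => (σ ^ (m : ℕ)).toLinearMap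
  let ι := Option (Σ m : Fin n, (φ m).Eigenvalues)
  let p : ι → Subspace k ↥V := fun i => match i with
    | none => ⊥
    | some ⟨m, c⟩ => if (m : ℕ) = 0 then ⊥ else
        Submodule.comap V.subtype (Module.End.eigenspace (φ m) (c : k))
  have hbotne : (⊥ : Subspace k ↥V) ≠ ⊤ := by
    intro h
    have : (⟨v0, hv0V⟩ : ↥V) ∈ (⊥ : Subspace k ↥V) := h ▸ Submodule.mem_top
    exact hv0 (congrArg Subtype.val (Submodule.mem_bot _ |>.mp this))
  have hne : ∀ i : ι, p i ≠ ⊤ := by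
    rintro (_ | ⟨m, c⟩)
    · exact hbotne
    · show (if (m : ℕ) = 0 then ⊥ else _) ≠ ⊤
      split
      · exact hbotne
      · rename_i hm0
        intro h
        apply aux_not_le_eigen σ hgen n hord hn2 hsum (m : ℕ) (by omega) m.2 (c : k)
        intro x hx
        have : (⟨x, hx⟩ : ↥V) ∈ Submodule.comap V.subtype
            (Module.End.eigenspace (φ m) (c : k)) := h ▸ Submodule.mem_top
        exact this
  have hcov : ⋃ i, (p i : Set ↥V) ≠ Set.univ := by
    intro h
    haveI : Finite ι := by
      haveI : ∀ m : Fin n, Finite (φ m).Eigenvalues := fun m =>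
        (Module.End.finite_hasEigenvalue (φ m)).to_subtype
      show Finite (Option (Σ m : Fin n, (φ m).Eigenvalues)); infer_instance
    obtain ⟨i, hi⟩ := Subspace.exists_eq_top_of_iUnion_eq_univ h
    exact hne i hi
  obtain ⟨zv, hzv⟩ := (Set.ne_univ_iff_exists_notMem _).mp hcov
  simp only [Set.mem_iUnion, not_exists] at hzv
  have hzvp : ∀ i : ι, zv ∉ p i := fun i hi => hzv i hi
  set z : L := (zv : L) with hz
  have hz0 : z ≠ 0 := by
    intro h
    exact hzvp none (by simpa [p, Submodule.mem_bot] using Subtype.ext (α := L) h)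
  have hTz : Algebra.trace k L z = 0 := zv.2
  have heig : ∀ m : ℕ, 0 < m → m < n → ∀ c : k, (σ ^ m) z ≠ c • z := by
    intro m hm0 hmn c hEq
    have hmem : z ∈ Module.End.eigenspace (φ ⟨m, hmn⟩) c := by
      rw [Module.End.mem_eigenspace_iff]
      exact hEq
    have hev : (φ ⟨m, hmn⟩).HasEigenvalue c :=
      Module.End.hasEigenvalue_of_hasEigenvector ⟨hmem, hz0⟩
    apply hzvp (some ⟨⟨m, hmn⟩, ⟨c, hev⟩⟩)
    show zv ∈ (if ((⟨m, hmn⟩ : Fin n) : ℕ) = 0 then ⊥ else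
        Submodule.comap V.subtype (Module.End.eigenspace (φ ⟨m, hmn⟩) (c : k)))
    rw [if_neg (by simp; omega)]
    simpa using hmem
  -- the element r
  set r : L := σ z / z with hr
  have hτz : ∀ τ' : L ≃ₐ[k] L, τ' z ≠ 0 := by
    intro τ' h
    exact hz0 ((map_eq_zero_iff τ' τ'.injective).mp h)
  refine ⟨r, ?_, ?_⟩
  · -- primitivity
    by_contra hK
    have hKfix : IntermediateField.fixingSubgroup (IntermediateField.adjoin k {r}) ≠ ⊥ := by
      intro h
      apply hK
      have h2 := IsGalois.fixedField_fixingSubgroup (IntermediateField.adjoin k {r})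
      rw [h, aux_fixedField_bot'] at h2
      exact h2.symm
    obtain ⟨τs, hτ1⟩ := Subgroup.ne_bot_iff_exists_ne_one.mp hKfix
    set τ : L ≃ₐ[k] L := (τs : L ≃ₐ[k] L) with hτ
    have hτne1 : τ ≠ 1 := by
      intro h
      exact hτ1 (Subtype.ext h)
    have hfixr : τ r = r :=
      (IntermediateField.mem_fixingSubgroup_iff _ τ).mp τs.2 r
        (IntermediateField.mem_adjoin_simple_self k r)
    -- τ = σ ^ m with 0 < m < n
    have hfin : IsOfFinOrder σ := orderOf_pos_iff.mp (by omega)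
    obtain ⟨j, hj⟩ := (Submonoid.mem_powers_iff _ _).mp
      (hfin.mem_powers_iff_mem_zpowers.mpr (hgen τ))
    set m : ℕ := j % n with hm
    have hσm : σ ^ m = τ := by
      rw [hm, ← hord, pow_mod_orderOf]
      exact hj
    have hmn : m < n := Nat.mod_lt _ (by omega)
    have hm0 : 0 < m := by
      rcases Nat.eq_zero_or_pos m with h | h
      · exact absurd (by rw [← hσm, h, pow_zero]) hτne1
      · exact h
    have hsr : (σ ^ m) r = r := by rw [hσm]; exact hfixr
    -- u := σ^m z / z is fixed by σ
    have hcomm : σ ((σ ^ m) z) = (σ ^ m) (σ z) := by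
      have h1 : σ * σ ^ m = σ ^ m * σ := ((Commute.refl σ).pow_right m).eq
      calc σ ((σ ^ m) z) = (σ * σ ^ m) z := (AlgEquiv.mul_apply _ _ _).symm
        _ = (σ ^ m * σ) z := by rw [h1]
        _ = (σ ^ m) (σ z) := AlgEquiv.mul_apply _ _ _
    have hfixu : σ ((σ ^ m) z / z) = (σ ^ m) z / z := by
      rw [map_div₀, hcomm]
      rw [hr, map_div₀] at hsr
      have h1 := hτz 1
      have h2 := hτz σ
      have h3 := hτz (σ ^ m)
      simp only [AlgEquiv.one_apply] at h1
      field_simp at hsr ⊢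
      linear_combination hsr
    have hallfix : ∀ τ' : L ≃ₐ[k] L, τ' ((σ ^ m) z / z) = (σ ^ m) z / z := by
      have hnat : ∀ i : ℕ, (σ ^ i) ((σ ^ m) z / z) = (σ ^ m) z / z := by
        intro i
        induction i with
        | zero => simp
        | succ i ih =>
            rw [pow_succ', AlgEquiv.mul_apply, ih, hfixu]
      intro τ'
      obtain ⟨i, hi⟩ := (Submonoid.mem_powers_iff _ _).mp
        (hfin.mem_powers_iff_mem_zpowers.mpr (hgen τ'))
      rw [← hi]
      exact hnat i
    have humem : (σ ^ m) z / z ∈ IntermediateField.fixedField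
        (IntermediateField.fixingSubgroup (⊥ : IntermediateField k L)) := by
      intro g
      exact hallfix g.1
    rw [IsGalois.fixedField_fixingSubgroup] at humem
    obtain ⟨c, hc⟩ := IntermediateField.mem_bot.mp humem
    apply heig m hm0 hmn c
    rw [Algebra.smul_def, hc, div_mul_cancel₀ _ hz0]
  · -- the Murphy sum
    have hprod : ∀ j : ℕ, ∏ i ∈ Finset.range j, (σ ^ i) r = (σ ^ j) z / z := by
      intro j
      induction j with
      | zero => simp [div_self hz0]
      | succ j ih =>
          rw [Finset.prod_range_succ, ih, hr, map_div₀]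
          have h1 : (σ ^ j) (σ z) = (σ ^ (j + 1)) z := by
            rw [pow_succ, AlgEquiv.mul_apply]
          rw [h1]
          have h2 := hτz (σ ^ j)
          have h3 := hτz (σ ^ (j + 1))
          field_simp
    calc ∑ j ∈ Finset.range n, ∏ i ∈ Finset.range j, (σ ^ i) r
        = ∑ j ∈ Finset.range n, (σ ^ j) z / z :=
          Finset.sum_congr rfl fun j _ => hprod j
      _ = (∑ j ∈ Finset.range n, (σ ^ j) z) / z := (Finset.sum_div _ _ _).symm
      _ = 0 := by rw [hsum z, hTz, map_zero, zero_div]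
end

section
/- Let r be a root of x³ - tx² - (t+3)x - 1 for t ∈ ℤ, and set z = 2r² - (2t+1)r - t - 4. Then z³ - (t² + 3t + 9)z + (t² + 3t + 9) = 0. -/
/-- If `r` is a root of `x³ - t x² - (t+3)x - 1` for `t ∈ ℤ` and
`z = 2r² - (2t+1)r - t - 4`, then `z³ - (t²+3t+9)z + (t²+3t+9) = 0`. -/
theorem shanks_kernel_element {K : Type*} [Field K] (t : ℤ) (r : K)
    (hr : r ^ 3 - (t : K) * r ^ 2 - ((t : K) + 3) * r - 1 = 0) :
    (2 * r ^ 2 - (2 * (t : K) + 1) * r - (t : K) - 4) ^ 3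
      - ((t : K) ^ 2 + 3 * (t : K) + 9) * (2 * r ^ 2 - (2 * (t : K) + 1) * r - (t : K) - 4)
      + ((t : K) ^ 2 + 3 * (t : K) + 9) = 0 := by
  linear_combination (8 * r ^ 3 - 16 * (t : K) * r ^ 2 - 12 * r ^ 2 + 8 * (t : K) ^ 2 * r
    + 8 * (t : K) * r - 18 * r + 4 * (t : K) ^ 2 + 24 * (t : K) + 19) * hr
end

section
/- Let k be a field of characteristic ≠ 2, m, A ∈ k with m² - 4 not a square in k, and u a root of u² - mu + 1 = 0 in k(√(m²-4)). Let p(x) = x⁴ + (u - u⁻¹ - A)x³ + ((2-A)u - A - 4)x² + (u² - 1 - Au)x + u², and let p̄(x) be obtained from p(x) by replacing u by u⁻¹. Then (x+u)⁴ · p̄((-x-1)/(x+u)) = (m-2)·p(x) as polynomials. -/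
open Polynomial

/-- The quartic `p(x) = x⁴ + (u - u⁻¹ - A)x³ + ((2-A)u - A - 4)x² + (u² - 1 - Au)x + u²`. -/
noncomputable def pquart {K : Type*} [Field K] (u A : K) : Polynomial K :=
  X ^ 4 + C (u - u⁻¹ - A) * X ^ 3 + C ((2 - A) * u - A - 4) * X ^ 2
    + C (u ^ 2 - 1 - A * u) * X + C (u ^ 2)

/-- with `u² - mu + 1 = 0` and `p̄` the conjugate quartic (replace `u` by
`u⁻¹`), the polynomial identity `(x+u)⁴·p̄((-x-1)/(x+u)) = (m-2)·p(x)` holds, written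
in cleared-denominator form. -/
theorem opensesame {k K : Type*} [Field k] [Field K] [Algebra k K]
    (h2 : (2 : k) ≠ 0) (m A : k) (hm : ∀ x : k, x ^ 2 ≠ m ^ 2 - 4)
    (u : K) (hu : u ^ 2 - algebraMap k K m * u + 1 = 0) :
    ∑ i ∈ Finset.range 5,
        C ((pquart u⁻¹ (algebraMap k K A)).coeff i) * (-(X + 1)) ^ i * (X + C u) ^ (4 - i)
      = C (algebraMap k K (m - 2)) * pquart u (algebraMap k K A) := by
  set M := algebraMap k K m with hM
  set Aa := algebraMap k K A with hA
  have hu0 : u ≠ 0 := by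
    rintro rfl
    simp at hu
  have hinv : u⁻¹ = M - u := by
    field_simp
    linear_combination hu
  have hinv3 : (M - u)⁻¹ = u := by rw [← hinv, inv_inv]
  have hmap : algebraMap k K (m - 2) = M - 2 := by
    rw [map_sub, map_ofNat]
  have Crel : (C u : Polynomial K) ^ 2 - C M * C u + 1 = 0 := by
    have := congrArg (C : K → Polynomial K) hu
    simpa [map_sub, map_add, map_mul, map_pow] using this
  simp only [pquart, hmap, Finset.sum_range_succ, Finset.sum_range_zero, coeff_add,
    coeff_C_mul, coeff_X_pow, coeff_C, coeff_X, inv_inv, hinv, hinv3]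
  norm_num
  simp only [map_sub, map_add, map_mul, map_pow, map_one, map_ofNat]
  linear_combination (1 + C u * C Aa - C u ^ 2 + C u ^ 2 * C M - C u ^ 2 * C Aa
      - C u ^ 3 - C u ^ 3 * C M + C u ^ 4
      + X * (2 + C Aa - 6 * C u + 3 * C u * C M - C u * C Aa - 3 * C u ^ 2
          - 3 * C u ^ 2 * C M - C u ^ 2 * C Aa + 3 * C u ^ 3)
      + X ^ 2 * (-6 + 3 * C M - 5 * C u - 3 * C u * C M - 2 * C u * C Aa + 3 * C u ^ 2)
      + X ^ 3 * (-3 - C M - C Aa + C u)) * Crel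
end

section
/- Let k be a field of characteristic ≠ 2, m, A ∈ k, u with u² - mu + 1 = 0, and suppose F(Y) = Y² + (-A + u - u⁻¹)Y - A - 4 - Au factors as (Y-α)(Y-β). Set Q₁ = 1 + α + u and Q₂ = 1 + β + u. Then α² - 4u = Q₁·(Q₁ + Q₂·u - 2(u+1)). -/
/-- if `u² - mu + 1 = 0` and `F(Y) = Y² + (-A + u - u⁻¹)Y - A - 4 - Au`
factors as `(Y-α)(Y-β)`, then with `Q₁ = 1 + α + u` and `Q₂ = 1 + β + u` one has
`α² - 4u = Q₁·(Q₁ + Q₂·u - 2(u+1))`. -/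
theorem disc_factor_identity {K : Type*} [Field K] (h2 : (2 : K) ≠ 0)
    (m A u α β : K) (hu : u ^ 2 - m * u + 1 = 0)
    (hsum : α + β = A - u + u⁻¹) (hprod : α * β = -A - 4 - A * u) :
    α ^ 2 - 4 * u
      = (1 + α + u) * ((1 + α + u) + (1 + β + u) * u - 2 * (u + 1)) := by
  have hu0 : u ≠ 0 := by
    rintro rfl; simp at hu
  have hinv : u * u⁻¹ = 1 := mul_inv_cancel₀ hu0
  have h := congrArg (· * u) hsum
  field_simp at h
  linear_combination (-(1+u)) * h - u * hprod
end

section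
/- Let k be a field of characteristic ≠ 2, m, A ∈ k with m² - 4 not a square in k. Let s, w be elements in an extension with s² = m² - 4, w² = (m+2+A)² - 4(m-2), and set u = (m+s)/2, q₁(x) = x² + ((-A+s-w)/2)x + (m+s)/2 and q₃(x) = x² + ((-A-s+w)/2)x + (m-s)/2. Then (x+u)²·q₃((-x-1)/(x+u)) = q₃(-1)·q₁(x) as polynomials in k(s,w)[x]. -/
open Polynomial

lemma q3_q1_aux {R : Type*} [CommRing R] (a b c u q : R)
    (h1 : q = 1 - a + c) (h2 : 2 - a * (1 + u) + 2 * c * u = q * b)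
    (h3 : 1 - a * u + c * u ^ 2 = q * u) :
    (X + 1) ^ 2 - C a * (X + 1) * (X + C u) + C c * (X + C u) ^ 2
      = C q * (X ^ 2 + C b * X + C u) := by
  have h1' := congrArg (C (R := R)) h1
  have h2' := congrArg (C (R := R)) h2
  have h3' := congrArg (C (R := R)) h3
  simp only [map_add, map_sub, map_mul, map_one, map_ofNat, map_pow] at h1' h2' h3'
  linear_combination h3' + h2' * X - h1' * X ^ 2

/-- with `s² = m² - 4`, `w² = (m+2+A)² - 4(m-2)`, `u = (m+s)/2`,
`q₁(x) = x² + ((-A+s-w)/2)x + (m+s)/2` and `q₃(x) = x² + ((-A-s+w)/2)x + (m-s)/2`,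
the polynomial identity `(x+u)²·q₃((-x-1)/(x+u)) = q₃(-1)·q₁(x)` holds (stated with
denominators cleared). -/
theorem q3_q1_identity {k K : Type*} [Field k] [Field K] [Algebra k K]
    (h2 : (2 : k) ≠ 0) (m A : k) (hm : ∀ x : k, x ^ 2 ≠ m ^ 2 - 4)
    (s w : K) (hs : s ^ 2 = algebraMap k K (m ^ 2 - 4))
    (hw : w ^ 2 = algebraMap k K ((m + 2 + A) ^ 2 - 4 * (m - 2))) :
    let M := algebraMap k K m
    let A' := algebraMap k K A
    let u := (M + s) / 2
    let q₁ : Polynomial K := X ^ 2 + C ((-A' + s - w) / 2) * X + C ((M + s) / 2)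
    let q₃ : Polynomial K := X ^ 2 + C ((-A' - s + w) / 2) * X + C ((M - s) / 2)
    (X + 1) ^ 2 - C ((-A' - s + w) / 2) * (X + 1) * (X + C u)
        + C ((M - s) / 2) * (X + C u) ^ 2
      = C (q₃.eval (-1)) * q₁ := by
  intro M A' u q₁ q₃
  simp only [map_sub, map_add, map_mul, map_pow, map_ofNat] at hs hw
  have h2K : (2 : K) ≠ 0 := by
    intro h
    exact h2 ((algebraMap k K).injective (by rw [map_ofNat, map_zero, h]))
  have hs' : s ^ 2 = M ^ 2 - 4 := hs
  have hw' : w ^ 2 = (M + 2 + A') ^ 2 - 4 * (M - 2) := hw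
  have hq : q₃.eval (-1) = 1 - (-A' - s + w) / 2 + (M - s) / 2 := by
    simp [q₃]; ring
  have he2 : 2 - ((-A' - s + w) / 2) * (1 + u) + 2 * ((M - s) / 2) * u
      = q₃.eval (-1) * ((-A' + s - w) / 2) := by
    rw [hq]
    show 2 - ((-A' - s + w) / 2) * (1 + (M + s) / 2) + 2 * ((M - s) / 2) * ((M + s) / 2)
      = (1 - (-A' - s + w) / 2 + (M - s) / 2) * ((-A' + s - w) / 2)
    field_simp
    linear_combination (-1 : K) * hs' + (-1 : K) * hw'
  have he3 : 1 - ((-A' - s + w) / 2) * u + ((M - s) / 2) * u ^ 2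
      = q₃.eval (-1) * u := by
    rw [hq]
    show 1 - ((-A' - s + w) / 2) * ((M + s) / 2) + ((M - s) / 2) * ((M + s) / 2) ^ 2
      = (1 - (-A' - s + w) / 2 + (M - s) / 2) * ((M + s) / 2)
    field_simp
    linear_combination ((-1 : K) * (s + M - 2)) * hs'
  have := q3_q1_aux ((-A' - s + w) / 2) ((-A' + s - w) / 2) ((M - s) / 2) u
    (q₃.eval (-1)) hq he2 he3
  simpa [q₁, u] using this
end

section
/- Let k be a number field, m, A algebraic integers in k with m² - 4 not a square in k, and suppose m - 2 is a unit in the ring of integers of k. Let r be a root of the octic T(m,A,x) = p(x)·p̄(x) (where p is as in the Murphy construction), and u = (m+s)/2 with s² = m²-4 chosen so p(r) = 0. Then r, r+1, and r+u are units in the ring of integers of k(r, s), and the differences of any two of them are units (i.e., they form an exceptional sequence of three units). -/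
open NumberField

lemma isIntegral_of_quartic {L : Type*} [CommRing L] (x c3 c2 c1 c0 : L)
    (h3 : IsIntegral ℤ c3) (h2 : IsIntegral ℤ c2) (h1 : IsIntegral ℤ c1)
    (h0 : IsIntegral ℤ c0)
    (h : x ^ 4 + c3 * x ^ 3 + c2 * x ^ 2 + c1 * x + c0 = 0) : IsIntegral ℤ x := by
  refine isIntegral_trans (A := integralClosure ℤ L) x ?_
  refine ⟨Polynomial.X ^ 4 + Polynomial.C ⟨c3, h3⟩ * Polynomial.X ^ 3
    + Polynomial.C ⟨c2, h2⟩ * Polynomial.X ^ 2 + Polynomial.C ⟨c1, h1⟩ * Polynomial.X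
    + Polynomial.C ⟨c0, h0⟩, ?_, ?_⟩
  · monicity!
  · simp only [Polynomial.eval₂_add, Polynomial.eval₂_mul, Polynomial.eval₂_pow,
      Polynomial.eval₂_X, Polynomial.eval₂_C]
    show x ^ 4 + c3 * x ^ 3 + c2 * x ^ 2 + c1 * x + c0 = 0
    exact h

lemma isIntegral_of_quadratic {L : Type*} [CommRing L] (x b c : L)
    (hb : IsIntegral ℤ b) (hc : IsIntegral ℤ c)
    (h : x ^ 2 + b * x + c = 0) : IsIntegral ℤ x := by
  refine isIntegral_trans (A := integralClosure ℤ L) x ?_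
  refine ⟨Polynomial.X ^ 2 + Polynomial.C ⟨b, hb⟩ * Polynomial.X + Polynomial.C ⟨c, hc⟩, ?_, ?_⟩
  · monicity!
  · simp only [Polynomial.eval₂_add, Polynomial.eval₂_mul, Polynomial.eval₂_pow,
      Polynomial.eval₂_X, Polynomial.eval₂_C]
    show x ^ 2 + b * x + c = 0
    exact h

lemma isUnit_of_isIntegral_inv {L : Type*} [CommRing L] (x : integralClosure ℤ L) (y : L)
    (hy : IsIntegral ℤ y) (h : (x : L) * y = 1) : IsUnit x :=
  IsUnit.of_mul_eq_one (a := x) ⟨y, hy⟩ (Subtype.ext h)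

/-- if `k` is a number field, `m, A` algebraic integers with `m² - 4`
not a square in `k` and `m - 2` a unit, and `r` is a root of the quartic factor
`p(x)` (with `u = (m+s)/2`, `s² = m² - 4`) of the octic `T(m,A,x)`, then
`r`, `r+1`, `r+u` form an exceptional sequence of three units: all three are
algebraic-integer units and all their pairwise differences are units. -/
theorem exceptional_sequence_of_murphy_octic {k L : Type*} [Field k] [NumberField k]
    [Field L] [Algebra k L] (m A : 𝓞 k)
    (hm : ∀ x : k, x ^ 2 ≠ (algebraMap (𝓞 k) k m) ^ 2 - 4)
    (hunit : IsUnit (m - 2))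
    (s u r : L)
    (hs : s ^ 2 = algebraMap k L ((algebraMap (𝓞 k) k m) ^ 2 - 4))
    (hu : u = (algebraMap k L (algebraMap (𝓞 k) k m) + s) / 2)
    (hp : r ^ 4 + (u - u⁻¹ - algebraMap k L (algebraMap (𝓞 k) k A)) * r ^ 3
        + ((2 - algebraMap k L (algebraMap (𝓞 k) k A)) * u
            - algebraMap k L (algebraMap (𝓞 k) k A) - 4) * r ^ 2
        + (u ^ 2 - 1 - algebraMap k L (algebraMap (𝓞 k) k A) * u) * r + u ^ 2 = 0) :
    ∃ a b c : integralClosure ℤ L,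
      (a : L) = r ∧ (b : L) = r + 1 ∧ (c : L) = r + u ∧
      IsUnit a ∧ IsUnit b ∧ IsUnit c ∧
      IsUnit (b - a) ∧ IsUnit (c - a) ∧ IsUnit (c - b) := by
  haveI : CharZero L := charZero_of_injective_algebraMap (algebraMap k L).injective
  set M : L := algebraMap k L (algebraMap (𝓞 k) k m) with hMdef
  set Ai : L := algebraMap k L (algebraMap (𝓞 k) k A) with hAidef
  -- basic relations
  have hs2 : s ^ 2 = M ^ 2 - 4 := by rw [hs, map_sub, map_pow, map_ofNat]
  have hu2 : u ^ 2 = M * u - 1 := by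
    have hsu : (2 : L) * u - M = s := by rw [hu]; field_simp; ring
    have h4 : (4 : L) * (u ^ 2 - M * u + 1) = 0 := by
      linear_combination hs2 + (2*u - M + s) * hsu
    have h5 : u ^ 2 - M * u + 1 = 0 := by
      rcases mul_eq_zero.mp h4 with h | h
      · norm_num at h
      · exact h
    linear_combination h5
  have hw : u * (M - u) = 1 := by linear_combination -hu2
  have hinv : u⁻¹ = M - u := inv_eq_of_mul_eq_one_right hw
  rw [hinv] at hp
  -- the inverse of m - 2
  obtain ⟨v, hv⟩ := hunit.exists_right_inv
  set V : L := algebraMap k L (algebraMap (𝓞 k) k v) with hVdef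
  have hV : (M - 2) * V = 1 := by
    have h2 := congrArg (fun x : 𝓞 k => algebraMap k L (algebraMap (𝓞 k) k x)) hv
    simpa [map_sub, map_mul, map_one, map_ofNat] using h2
  -- integrality facts
  have hMint : IsIntegral ℤ M :=
    (NumberField.RingOfIntegers.isIntegral_coe m).map (algebraMap k L).toIntAlgHom
  have hAint : IsIntegral ℤ Ai :=
    (NumberField.RingOfIntegers.isIntegral_coe A).map (algebraMap k L).toIntAlgHom
  have hVint : IsIntegral ℤ V :=
    (NumberField.RingOfIntegers.isIntegral_coe v).map (algebraMap k L).toIntAlgHom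
  have h1i : IsIntegral ℤ (1 : L) := isIntegral_one
  have h2i : IsIntegral ℤ (2 : L) := by have := h1i.add h1i; norm_num at this; exact this
  have h4i : IsIntegral ℤ (4 : L) := by
    have := h2i.add h2i; norm_num at this; exact this
  have huint : IsIntegral ℤ u := by
    refine isIntegral_of_quadratic u (-M) 1 hMint.neg h1i (by linear_combination hu2)
  have hwint : IsIntegral ℤ (M - u) := hMint.sub huint
  have hc3 : IsIntegral ℤ (u - (M - u) - Ai) := (huint.sub hwint).sub hAint
  have hc2 : IsIntegral ℤ ((2 - Ai) * u - Ai - 4) :=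
    (((h2i.sub hAint).mul huint).sub hAint).sub h4i
  have hc1 : IsIntegral ℤ (u ^ 2 - 1 - Ai * u) := ((huint.pow 2).sub h1i).sub (hAint.mul huint)
  have hrint : IsIntegral ℤ r :=
    isIntegral_of_quartic r _ _ _ _ hc3 hc2 hc1 (huint.pow 2) hp
  -- the three elements
  refine ⟨⟨r, hrint⟩, ⟨r + 1, hrint.add h1i⟩, ⟨r + u, hrint.add huint⟩, rfl, rfl, rfl,
    ?_, ?_, ?_, ?_, ?_, ?_⟩
  · -- r is a unit
    refine isUnit_of_isIntegral_inv _
      (-(r^3 + (u - (M - u) - Ai)*r^2 + ((2 - Ai)*u - Ai - 4)*r + (u^2 - 1 - Ai*u)) * (M - u)^2)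
      ?_ ?_
    · exact ((((hrint.pow 3).add (hc3.mul (hrint.pow 2))).add
        (hc2.mul hrint)).add hc1).neg.mul (hwint.pow 2)
    · show r * _ = 1
      linear_combination (-(M-u)^2) * hp + (u*(M-u)+1) * hw
  · -- r + 1 is a unit
    refine isUnit_of_isIntegral_inv _
      (-(r^3 + ((u - (M - u) - Ai) - 1)*r^2 + (((2 - Ai)*u - Ai - 4) - (u - (M - u) - Ai) + 1)*r
        + ((u^2 - 1 - Ai*u) - ((2 - Ai)*u - Ai - 4) + (u - (M - u) - Ai) - 1)) * V) ?_ ?_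
    · exact ((((hrint.pow 3).add ((hc3.sub h1i).mul (hrint.pow 2))).add
        (((hc2.sub hc3).add h1i).mul hrint)).add
        (((hc1.sub hc2).add hc3).sub h1i)).neg.mul hVint
    · show (r + 1) * _ = 1
      linear_combination (-V) * hp + hV
  · -- r + u is a unit
    refine isUnit_of_isIntegral_inv _
      (-(r^3 + ((u - (M - u) - Ai) - u)*r^2
        + (((2 - Ai)*u - Ai - 4) - (u - (M - u) - Ai)*u + u^2)*r
        + ((u^2 - 1 - Ai*u) - ((2 - Ai)*u - Ai - 4)*u + (u - (M - u) - Ai)*u^2 - u^3))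
        * V * (M - u)^2) ?_ ?_
    · exact (((((hrint.pow 3).add ((hc3.sub huint).mul (hrint.pow 2))).add
        (((hc2.sub (hc3.mul huint)).add (huint.pow 2)).mul hrint)).add
        (((hc1.sub (hc2.mul huint)).add (hc3.mul (huint.pow 2))).sub
          (huint.pow 3))).neg.mul hVint).mul (hwint.pow 2)
    · show (r + u) * _ = 1
      linear_combination (-V*(M-u)^2) * hp + (V*(M-u)^2*(u-u^2)) * hu2
        + ((M-2)*V*(u*(M-u)+1)) * hw + hV
  · -- b - a = 1
    have : (⟨r + 1, hrint.add h1i⟩ - ⟨r, hrint⟩ : integralClosure ℤ L) = 1 := by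
      ext; push_cast; ring
    rw [this]; exact isUnit_one
  · -- c - a = u
    refine isUnit_of_isIntegral_inv _ (M - u) hwint ?_
    have : ((⟨r + u, hrint.add huint⟩ - ⟨r, hrint⟩ : integralClosure ℤ L) : L) = u := by
      push_cast; ring
    rw [this]; exact hw
  · -- c - b = u - 1
    refine isUnit_of_isIntegral_inv _ ((u - 1) * V * (M - u))
      (((huint.sub h1i).mul hVint).mul hwint) ?_
    have : ((⟨r + u, hrint.add huint⟩ - ⟨r + 1, hrint.add h1i⟩ : integralClosure ℤ L) : L)
        = u - 1 := by push_cast; ring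
    rw [this]
    have hd : (u - 1)^2 = (M - 2)*u := by linear_combination hu2
    linear_combination (V*(M-u)) * hd + (M-2)*V*hw + hV
end
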